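/- Along any solution of the error system ė_pⁱ = e_vⁱ, mᵢė_vⁱ = uⁱ with the control law uⁱ = −Σ_{j∈Nᵢ} mᵢw_{ij}(e_vⁱ − e_vʲ) − Σ_{j∈Nᵢ} mᵢ∇_{e_pⁱ}Ṽ^{ij} − e_vⁱ, the energy function J = (1/2)Σ_{i=1}^N (Ṽⁱ + e_vⁱᵀe_vⁱ) satisfies J̇ = −e_vᵀ(L⊗Iₙ)e_v − e_vᵀ(M⁻¹⊗Iₙ)e_v ≤ 0, where M⁻¹ = diag(1/m₁, …, 1/m_N), and J̇ = 0 only if e_v¹ = ⋯ = e_vᴺ = 0. -/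

import Mathlib

open Filter Topology Matrix
open scoped Kronecker RealInnerProductSpace

lemma grad_odd {E : Type*} [NormedAddCommGroup E] [InnerProductSpace ℝ E] [CompleteSpace E]
    {f : E → ℝ} (hf : Differentiable ℝ f) (heven : ∀ z, f (-z) = f z) (z : E) :
    gradient f (-z) = - gradient f z := by
  have h1 : HasGradientAt f (gradient f (-z)) (-z) := (hf (-z)).hasGradientAt
  have hneg : HasFDerivAt (fun x : E => -x) (-(ContinuousLinearMap.id ℝ E)) z :=
    (ContinuousLinearMap.id ℝ E).hasFDerivAt.neg
  have h2 := (h1.hasFDerivAt.comp z hneg :)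
  have h3 : (f ∘ fun x : E => -x) = f := funext fun x => heven x
  rw [h3] at h2
  have h4 : ((InnerProductSpace.toDual ℝ E) (gradient f (-z))).comp (-(ContinuousLinearMap.id ℝ E))
      = (InnerProductSpace.toDual ℝ E) (-(gradient f (-z))) := by
    ext v
    simp [InnerProductSpace.toDual_apply_apply, inner_neg_left, inner_neg_right]
  rw [h4] at h2
  have h5 : HasGradientAt f (-(gradient f (-z))) z := by
    have h6 := h2.hasGradientAt
    rwa [LinearIsometryEquiv.symm_apply_apply] at h6
  have := (hf z).hasGradientAt.unique h5
  rw [this, neg_neg]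

lemma kron_quad {N n : ℕ} (A : Matrix (Fin N) (Fin N) ℝ) (x : Fin N × Fin n → ℝ) :
    x ⬝ᵥ (A ⊗ₖ (1 : Matrix (Fin n) (Fin n) ℝ)).mulVec x
      = ∑ i, ∑ j, A i j * ∑ k, x (i, k) * x (j, k) := by
  simp only [dotProduct, Matrix.mulVec, Matrix.kroneckerMap_apply, Matrix.one_apply,
    Fintype.sum_prod_type]
  simp only [mul_ite, mul_zero, mul_one, ite_mul, zero_mul, Finset.sum_ite_eq,
    Finset.mem_univ, if_true, Finset.mul_sum, Finset.sum_mul]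
  refine Finset.sum_congr rfl fun i _ => ?_
  rw [Finset.sum_comm]
  refine Finset.sum_congr rfl fun j _ => ?_
  refine Finset.sum_congr rfl fun k _ => ?_
  ring

/-- **Theorem 2 (energy decay).** Along any solution of the error system
`ė_pⁱ = e_vⁱ`, `mᵢė_vⁱ = uⁱ` with control law
`uⁱ = -Σ_{j∈Nᵢ} mᵢw_{ij}(e_vⁱ - e_vʲ) - Σ_{j∈Nᵢ} mᵢ∇_{e_pⁱ}Ṽ^{ij} - e_vⁱ`,
the energy `J = ½Σᵢ(Ṽⁱ + e_vⁱᵀe_vⁱ)` satisfies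
`J̇ = -e_vᵀ(L⊗Iₙ)e_v - e_vᵀ(M⁻¹⊗Iₙ)e_v ≤ 0`, where `M⁻¹ = diag(1/m₁, …, 1/m_N)`,
and `J̇ = 0` only if all `e_vⁱ = 0`. -/
theorem energy_derivative_mass_scaled
    (N n : ℕ)
    (m : Fin N → ℝ) (hm : ∀ i, 0 < m i)
    (G : SimpleGraph (Fin N)) [DecidableRel G.Adj] (hG : G.Connected)
    (w : Fin N → Fin N → ℝ)
    (hw_symm : ∀ i j, w i j = w j i)
    (hw_nonneg : ∀ i j, 0 ≤ w i j)
    (hw_diag : ∀ i, w i i = 0)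
    (hw_adj : ∀ i j, 0 < w i j ↔ G.Adj i j)
    -- the potential `Ṽ^{ij}`, viewed as a function of the relative position
    -- vector `e_pⁱ - e_pʲ`
    (V : Fin N → Fin N → EuclideanSpace ℝ (Fin n) → ℝ)
    (hV_symm : ∀ i j, V i j = V j i)
    (hV_rad : ∀ i j (z z' : EuclideanSpace ℝ (Fin n)), ‖z‖ = ‖z'‖ → V i j z = V i j z')
    (hV_diff : ∀ i j, G.Adj i j → Differentiable ℝ (V i j))
    (hV_nonneg : ∀ i j z, 0 ≤ V i j z)
    (ep ev u : Fin N → ℝ → EuclideanSpace ℝ (Fin n))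
    (hu : ∀ i t, u i t =
      -(∑ j ∈ G.neighborFinset i, (m i * w i j) • (ev i t - ev j t))
      - (∑ j ∈ G.neighborFinset i, m i • gradient (V i j) (ep i t - ep j t))
      - ev i t)
    (hep : ∀ i t, HasDerivAt (ep i) (ev i t) t)
    (hev : ∀ i t, HasDerivAt (ev i) ((m i)⁻¹ • u i t) t)
    (L : Matrix (Fin N) (Fin N) ℝ)
    (hL : ∀ i j, L i j = if i = j then ∑ k ∈ Finset.univ.erase i, w i k else -w i j)
    (J : ℝ → ℝ)
    (hJ : ∀ t, J t = (1 / 2) * ∑ i,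
      ((∑ j ∈ G.neighborFinset i, V i j (ep i t - ep j t)) + ⟪ev i t, ev i t⟫))
    -- the stacked vector `e_v(t) ∈ ℝ^{Nn}`
    (e : ℝ → Fin N × Fin n → ℝ)
    (he : ∀ t p, e t p = ev p.1 t p.2) :
    ∀ t : ℝ,
      HasDerivAt J
        (-(e t ⬝ᵥ (L ⊗ₖ (1 : Matrix (Fin n) (Fin n) ℝ)).mulVec (e t))
          - e t ⬝ᵥ (Matrix.diagonal (fun i => (m i)⁻¹) ⊗ₖ (1 : Matrix (Fin n) (Fin n) ℝ)).mulVec (e t)) t ∧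
      (-(e t ⬝ᵥ (L ⊗ₖ (1 : Matrix (Fin n) (Fin n) ℝ)).mulVec (e t))
          - e t ⬝ᵥ (Matrix.diagonal (fun i => (m i)⁻¹) ⊗ₖ (1 : Matrix (Fin n) (Fin n) ℝ)).mulVec (e t) ≤ 0) ∧
      ((-(e t ⬝ᵥ (L ⊗ₖ (1 : Matrix (Fin n) (Fin n) ℝ)).mulVec (e t))
          - e t ⬝ᵥ (Matrix.diagonal (fun i => (m i)⁻¹) ⊗ₖ (1 : Matrix (Fin n) (Fin n) ℝ)).mulVec (e t) = 0) →
        ∀ i, ev i t = 0) := by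
  intro t
  -- abbreviations
  set g : Fin N → Fin N → EuclideanSpace ℝ (Fin n) :=
    fun i j => gradient (V i j) (ep i t - ep j t) with hg_def
  have hw0 : ∀ i j, ¬ G.Adj i j → w i j = 0 := fun i j h =>
    le_antisymm (not_lt.1 fun hlt => h ((hw_adj i j).1 hlt)) (hw_nonneg i j)
  have hgodd : ∀ i j, G.Adj i j → g j i = - g i j := by
    intro i j hadj
    have heven : ∀ z : EuclideanSpace ℝ (Fin n), V i j (-z) = V i j z :=
      fun z => hV_rad i j (-z) z (norm_neg z)
    have : ep j t - ep i t = -(ep i t - ep j t) := by abel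
    simp only [hg_def, hV_symm j i]
    rw [this, grad_odd (hV_diff i j hadj) heven]
  -- guarded-sum form of neighbor sums
  have hnb : ∀ (f : Fin N → Fin N → ℝ) (i : Fin N),
      ∑ j ∈ G.neighborFinset i, f i j = ∑ j, if G.Adj i j then f i j else 0 := by
    intro f i
    rw [SimpleGraph.neighborFinset_eq_filter, Finset.sum_filter]
  -- key scalar quantities
  set A : ℝ := ∑ i, ∑ j, if G.Adj i j then ⟪g i j, ev i t⟫ else 0 with hA_def
  set B : ℝ := ∑ i, ∑ j, w i j * ⟪ev i t, ev i t - ev j t⟫ with hB_def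
  set C : ℝ := ∑ i, (m i)⁻¹ * ⟪ev i t, ev i t⟫ with hC_def
  -- Step 1 : derivative of the potential part
  have hS1 : ∑ i, ∑ j ∈ G.neighborFinset i, ⟪g i j, ev i t - ev j t⟫ = 2 * A := by
    have hsplit : ∀ i : Fin N, ∑ j ∈ G.neighborFinset i, ⟪g i j, ev i t - ev j t⟫
        = (∑ j, if G.Adj i j then ⟪g i j, ev i t⟫ else 0)
          - (∑ j, if G.Adj i j then ⟪g i j, ev j t⟫ else 0) := by
      intro i
      rw [SimpleGraph.neighborFinset_eq_filter, Finset.sum_filter, ← Finset.sum_sub_distrib]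
      refine Finset.sum_congr rfl fun j _ => ?_
      by_cases h : G.Adj i j
      · simp [h, inner_sub_right]
      · simp [h]
    have hT : ∑ i, ∑ j, (if G.Adj i j then ⟪g i j, ev j t⟫ else 0) = -A := by
      rw [Finset.sum_comm]
      rw [hA_def, ← Finset.sum_neg_distrib]
      refine Finset.sum_congr rfl fun i _ => ?_
      rw [← Finset.sum_neg_distrib]
      refine Finset.sum_congr rfl fun j _ => ?_
      by_cases h : G.Adj i j
      · have h' : G.Adj j i := h.symm
        simp only [h, h', if_true]
        rw [hgodd i j h, inner_neg_left]
      · have h' : ¬ G.Adj j i := fun hc => h hc.symm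
        simp [h, h']
    simp only [hsplit]
    rw [Finset.sum_sub_distrib, hT]
    ring
  -- Step 2 : inner product with the control input
  have hU : ∀ i, ⟪ev i t, (m i)⁻¹ • u i t⟫
      = -(∑ j, if G.Adj i j then ⟪ev i t, g i j⟫ else 0)
        - (∑ j, w i j * ⟪ev i t, ev i t - ev j t⟫)
        - (m i)⁻¹ * ⟪ev i t, ev i t⟫ := by
    intro i
    have hmne : (m i) ≠ 0 := (hm i).ne'
    rw [real_inner_smul_right, hu i t]
    rw [inner_sub_right, inner_sub_right, inner_neg_right, inner_sum, inner_sum]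
    simp only [real_inner_smul_right]
    have e1 : ∑ j ∈ G.neighborFinset i, m i * w i j * ⟪ev i t, ev i t - ev j t⟫
        = m i * ∑ j, w i j * ⟪ev i t, ev i t - ev j t⟫ := by
      rw [Finset.mul_sum]
      rw [Finset.sum_subset (Finset.subset_univ _)]
      · exact Finset.sum_congr rfl fun j _ => by ring
      · intro j _ hj
        rw [SimpleGraph.mem_neighborFinset] at hj
        rw [hw0 i j hj]; ring
    have e2 : ∑ j ∈ G.neighborFinset i, m i * ⟪ev i t, g i j⟫
        = m i * ∑ j, if G.Adj i j then ⟪ev i t, g i j⟫ else 0 := by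
      rw [hnb (fun i j => m i * ⟪ev i t, g i j⟫) i, Finset.mul_sum]
      refine Finset.sum_congr rfl fun j _ => ?_
      by_cases h : G.Adj i j <;> simp [h]
    rw [e1, e2]
    field_simp
    ring
  -- Step 3 : the value of the derivative
  have hderiv : HasDerivAt J
      ((1 / 2) * ∑ i, ((∑ j ∈ G.neighborFinset i, ⟪g i j, ev i t - ev j t⟫)
        + (⟪ev i t, (m i)⁻¹ • u i t⟫ + ⟪(m i)⁻¹ • u i t, ev i t⟫))) t := by
    have hJfun : J = fun s => (1 / 2) * ∑ i,
        ((∑ j ∈ G.neighborFinset i, V i j (ep i s - ep j s)) + ⟪ev i s, ev i s⟫) :=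
      funext hJ
    rw [hJfun]
    refine HasDerivAt.const_mul _ (HasDerivAt.fun_sum fun i _ => HasDerivAt.add ?_ ?_)
    · refine HasDerivAt.fun_sum fun j hj => ?_
      have hadj : G.Adj i j := by rwa [SimpleGraph.mem_neighborFinset] at hj
      have hd : HasDerivAt (fun s => ep i s - ep j s) (ev i t - ev j t) t :=
        (hep i t).sub (hep j t)
      have hgr : HasGradientAt (V i j) (g i j) (ep i t - ep j t) :=
        ((hV_diff i j hadj) _).hasGradientAt
      have := hgr.hasFDerivAt.comp_hasDerivAt t hd
      simpa [Function.comp_def, InnerProductSpace.toDual_apply_apply] using this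
    · exact HasDerivAt.inner ℝ (hev i t) (hev i t)
  -- identify the two quadratic forms
  have hQL : e t ⬝ᵥ (L ⊗ₖ (1 : Matrix (Fin n) (Fin n) ℝ)).mulVec (e t) = B := by
    rw [kron_quad]
    have hinner : ∀ i j : Fin N, (∑ k, e t (i, k) * e t (j, k)) = ⟪ev i t, ev j t⟫ := by
      intro i j
      simp only [he]
      rw [PiLp.inner_apply]
      simp [RCLike.inner_apply, conj_trivial]
      exact Finset.sum_congr rfl fun k _ => mul_comm _ _
    simp only [hinner]
    rw [hB_def]
    refine Finset.sum_congr rfl fun i _ => ?_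
    have hrow : ∑ j, L i j * ⟪ev i t, ev j t⟫
        = (∑ k ∈ Finset.univ.erase i, w i k) * ⟪ev i t, ev i t⟫
          + ∑ j ∈ Finset.univ.erase i, (-(w i j)) * ⟪ev i t, ev j t⟫ := by
      rw [← Finset.add_sum_erase _ _ (Finset.mem_univ i)]
      congr 1
      · rw [hL]; simp
      · refine Finset.sum_congr rfl fun j hj => ?_
        rw [hL]
        have : ¬ i = j := fun h => (Finset.mem_erase.1 hj).1 h.symm
        simp [this]
    rw [hrow, Finset.sum_mul, ← Finset.sum_add_distrib]
    rw [← Finset.add_sum_erase _ (fun j => w i j * ⟪ev i t, ev i t - ev j t⟫) (Finset.mem_univ i)]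
    rw [hw_diag i]
    simp only [zero_mul, zero_add]
    refine Finset.sum_congr rfl fun j _ => ?_
    rw [inner_sub_right]
    ring
  have hQM : e t ⬝ᵥ (Matrix.diagonal (fun i => (m i)⁻¹) ⊗ₖ (1 : Matrix (Fin n) (Fin n) ℝ)).mulVec (e t) = C := by
    rw [kron_quad]
    have hinner : ∀ i j : Fin N, (∑ k, e t (i, k) * e t (j, k)) = ⟪ev i t, ev j t⟫ := by
      intro i j
      simp only [he]
      rw [PiLp.inner_apply]
      simp [RCLike.inner_apply, conj_trivial]
      exact Finset.sum_congr rfl fun k _ => mul_comm _ _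
    simp only [hinner, Matrix.diagonal_apply]
    rw [hC_def]
    refine Finset.sum_congr rfl fun i _ => ?_
    simp [Finset.sum_ite_eq, eq_comm]
  -- the derivative equals -QL - QM
  have key : (1 / 2) * ∑ i, ((∑ j ∈ G.neighborFinset i, ⟪g i j, ev i t - ev j t⟫)
        + (⟪ev i t, (m i)⁻¹ • u i t⟫ + ⟪(m i)⁻¹ • u i t, ev i t⟫)) = -B - C := by
    have hAA : ∀ i, ∑ j, (if G.Adj i j then ⟪ev i t, g i j⟫ else 0)
        = ∑ j, (if G.Adj i j then ⟪g i j, ev i t⟫ else 0) := by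
      intro i
      refine Finset.sum_congr rfl fun j _ => ?_
      by_cases h : G.Adj i j
      · simp only [h, if_true]
        exact real_inner_comm _ _
      · simp [h]
    have hcomm : ∀ i, ⟪(m i)⁻¹ • u i t, ev i t⟫ = ⟪ev i t, (m i)⁻¹ • u i t⟫ :=
      fun i => real_inner_comm _ _
    simp only [hcomm, hU, hAA]
    rw [Finset.sum_add_distrib, hS1]
    rw [hB_def, hC_def, hA_def]
    simp only [Finset.sum_add_distrib, Finset.sum_sub_distrib, Finset.sum_neg_distrib]
    ring
  have hderiv' : HasDerivAt J
      (-(e t ⬝ᵥ (L ⊗ₖ (1 : Matrix (Fin n) (Fin n) ℝ)).mulVec (e t))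
        - e t ⬝ᵥ (Matrix.diagonal (fun i => (m i)⁻¹) ⊗ₖ (1 : Matrix (Fin n) (Fin n) ℝ)).mulVec (e t)) t := by
    rw [hQL, hQM, ← key]; exact hderiv
  -- nonnegativity of the quadratic forms
  have hBnn : 0 ≤ B := by
    have hswap : B = ∑ i, ∑ j, w i j * ⟪ev j t, ev j t - ev i t⟫ := by
      rw [hB_def, Finset.sum_comm]
      refine Finset.sum_congr rfl fun i _ => Finset.sum_congr rfl fun j _ => ?_
      rw [hw_symm j i]
    have h2B : 2 * B = ∑ i, ∑ j, w i j * ⟪ev i t - ev j t, ev i t - ev j t⟫ := by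
      have htwo : 2 * B = B + B := by ring
      rw [htwo]
      nth_rewrite 2 [hswap]
      rw [hB_def, ← Finset.sum_add_distrib]
      refine Finset.sum_congr rfl fun i _ => ?_
      rw [← Finset.sum_add_distrib]
      refine Finset.sum_congr rfl fun j _ => ?_
      rw [← mul_add]
      congr 1
      rw [inner_sub_left]
      have : ⟪ev j t, ev j t - ev i t⟫ = - ⟪ev j t, ev i t - ev j t⟫ := by
        rw [← inner_neg_right]; congr 1; abel
      rw [this]; ring
    have : 0 ≤ 2 * B := by
      rw [h2B]
      refine Finset.sum_nonneg fun i _ => Finset.sum_nonneg fun j _ => ?_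
      exact mul_nonneg (hw_nonneg i j) real_inner_self_nonneg
    linarith
  have hCnn_term : ∀ i, 0 ≤ (m i)⁻¹ * ⟪ev i t, ev i t⟫ :=
    fun i => mul_nonneg (inv_nonneg.2 (hm i).le) real_inner_self_nonneg
  have hCnn : 0 ≤ C := Finset.sum_nonneg fun i _ => hCnn_term i
  refine ⟨hderiv', ?_, ?_⟩
  · rw [hQL, hQM]; linarith
  · intro hzero i
    rw [hQL, hQM] at hzero
    have hC0 : C = 0 := by linarith
    have := (Finset.sum_eq_zero_iff_of_nonneg fun i _ => hCnn_term i).1 hC0 i (Finset.mem_univ i)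
    have hinner0 : ⟪ev i t, ev i t⟫ = 0 := by
      have hmne : (m i)⁻¹ ≠ 0 := inv_ne_zero (hm i).ne'
      rcases mul_eq_zero.1 this with h | h
      · exact absurd h hmne
      · exact h
    exact inner_self_eq_zero.1 hinner0
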